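/- In Minkowski space with L(v) = -|v|_η^{1/2} on causal vectors, for p strictly inside the dual causal cone, any maximizer v of v ↦ p(v) - L(v) over the causal cone cannot lie on the boundary of the causal cone: if v is a nonzero null vector, then perturbing v to v(ε) = v + ε e₀ (with e₀ a future unit timelike vector) yields |v(ε)|_η^{1/2} ≥ (2λ₀)^{1/4} ε^{1/4} where λ₀ > 0 is the e₀-component of v, so p(v(ε)) + |v(ε)|_η^{1/2} > p(v) for small ε > 0. -/
import Mathlib


/- STATEMENT 4: In Minkowski space, for p = η(w,·) strictly inside the dual causal cone,
a maximizer of v ↦ p(v) - L(v) = p(v) + |v|_η^{1/2} over the causal cone cannot be a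
nonzero null vector v: perturbing to v(ε) = v + ε e₀ gives
|v(ε)|_η^{1/2} ≥ (2λ₀)^{1/4} ε^{1/4} (= √√(2λ₀ε)) with λ₀ = v⁰ > 0, hence
p(v(ε)) + |v(ε)|_η^{1/2} > p(v) for small ε > 0; so v is not a maximizer. -/

def mink {n : ℕ} (v w : Fin (n+1) → ℝ) : ℝ :=
  (∑ i, v i * w i) - 2 * (v 0 * w 0)

def IsCausalVec {n : ℕ} (v : Fin (n+1) → ℝ) : Prop :=
  mink v v ≤ 0 ∧ 0 ≤ v 0

/-- The future unit timelike vector e₀. -/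
def e0 {n : ℕ} : Fin (n+1) → ℝ := fun i => if i = 0 then 1 else 0

lemma mink_add_smul {n : ℕ} (v w u : Fin (n+1) → ℝ) (a : ℝ) :
    mink v (w + a • u) = mink v w + a * mink v u := by
  simp only [mink, Pi.add_apply, Pi.smul_apply, smul_eq_mul, mul_add, Finset.sum_add_distrib,
    Finset.mul_sum, mul_sub, mul_left_comm]
  ring

lemma mink_comm {n : ℕ} (v w : Fin (n+1) → ℝ) : mink v w = mink w v := by
  simp [mink, mul_comm]

lemma mink_e0_right {n : ℕ} (v : Fin (n+1) → ℝ) : mink v e0 = - v 0 := by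
  simp [mink, e0, mul_ite]; ring

lemma mink_expand {n : ℕ} (v : Fin (n+1) → ℝ) (a : ℝ) :
    mink (v + a • e0) (v + a • e0) = mink v v - 2 * a * v 0 - a ^ 2 := by
  rw [mink_add_smul, mink_comm (v + a • e0) v, mink_add_smul, mink_comm (v + a • e0) e0,
    mink_add_smul, mink_e0_right, mink_comm e0 v, mink_e0_right]
  have : mink (e0 : Fin (n+1) → ℝ) e0 = -1 := by
    have := mink_e0_right (e0 : Fin (n+1) → ℝ)
    simpa [e0] using this
  rw [this]; ring

theorem stmt_4 {n : ℕ} (w v : Fin (n+1) → ℝ)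
    -- p = η(w,·) lies in the interior of the dual cone:
    (hint : ∀ u : Fin (n+1) → ℝ, IsCausalVec u → u ≠ 0 → mink w u < 0)
    -- v is a nonzero null (boundary causal) vector:
    (hnull : mink v v = 0) (hv0 : 0 < v 0) :
    (∀ ε : ℝ, 0 < ε →
        Real.sqrt (Real.sqrt (2 * v 0 * ε))
          ≤ Real.sqrt (Real.sqrt |mink (v + ε • e0) (v + ε • e0)|)) ∧
    (∃ ε₀ > (0:ℝ), ∀ ε : ℝ, 0 < ε → ε < ε₀ →
        mink w v <
          mink w (v + ε • e0) + Real.sqrt (Real.sqrt |mink (v + ε • e0) (v + ε • e0)|)) ∧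
    ¬ (∀ u : Fin (n+1) → ℝ, IsCausalVec u →
        mink w u + Real.sqrt (Real.sqrt |mink u u|)
          ≤ mink w v + Real.sqrt (Real.sqrt |mink v v|)) := by
  have key : ∀ ε : ℝ, 0 < ε → |mink (v + ε • e0) (v + ε • e0)| = 2 * v 0 * ε + ε ^ 2 := by
    intro ε hε
    rw [mink_expand, hnull, abs_of_nonpos (by nlinarith)]
    ring
  have part1 : ∀ ε : ℝ, 0 < ε →
      Real.sqrt (Real.sqrt (2 * v 0 * ε))
        ≤ Real.sqrt (Real.sqrt |mink (v + ε • e0) (v + ε • e0)|) := by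
    intro ε hε
    rw [key ε hε]
    exact Real.sqrt_le_sqrt (Real.sqrt_le_sqrt (by nlinarith))
  -- w 0 > 0
  have hw0 : 0 < w 0 := by
    have hc : IsCausalVec (e0 : Fin (n+1) → ℝ) := by
      constructor
      · have := mink_e0_right (e0 : Fin (n+1) → ℝ)
        simp [e0] at this; simp [this]
      · simp [e0]
    have hne : (e0 : Fin (n+1) → ℝ) ≠ 0 := by
      intro h
      have := congrFun h 0
      simp [e0] at this
    have := hint e0 hc hne
    rw [mink_e0_right] at this
    linarith
  have part2 : ∃ ε₀ > (0:ℝ), ∀ ε : ℝ, 0 < ε → ε < ε₀ →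
      mink w v <
        mink w (v + ε • e0) + Real.sqrt (Real.sqrt |mink (v + ε • e0) (v + ε • e0)|) := by
    refine ⟨min 1 (2 * v 0 / (w 0) ^ 4), lt_min one_pos (by positivity), ?_⟩
    intro ε hε hε₀
    have h1 : ε < 1 := lt_of_lt_of_le hε₀ (min_le_left _ _)
    have h2 : ε < 2 * v 0 / (w 0) ^ 4 := lt_of_lt_of_le hε₀ (min_le_right _ _)
    have h3 : ε * (w 0) ^ 4 < 2 * v 0 := (lt_div_iff₀ (pow_pos hw0 4)).mp h2
    have e2 : ε ^ 2 ≤ 1 := by nlinarith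
    have e3 : ε ^ 3 ≤ ε := by nlinarith [mul_le_mul_of_nonneg_left e2 hε.le]
    have e4 := mul_lt_mul_of_pos_left h3 (pow_pos hε 3)
    have h4 : (ε * w 0) ^ 4 < 2 * v 0 * ε := by nlinarith
    have h5 : ε * w 0 < Real.sqrt (Real.sqrt (2 * v 0 * ε)) := by
      have hnn : (0:ℝ) ≤ ε * w 0 := by positivity
      have hs : (ε * w 0) ^ 2 < Real.sqrt (2 * v 0 * ε) := by
        rw [show ((ε * w 0) ^ 2 : ℝ) = |(ε * w 0) ^ 2| from (abs_of_nonneg (by positivity)).symm,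
          ← Real.sqrt_sq_eq_abs]
        exact Real.sqrt_lt_sqrt (by positivity) (by nlinarith)
      calc ε * w 0 ≤ Real.sqrt ((ε * w 0) ^ 2) := by
              rw [Real.sqrt_sq_eq_abs]; exact le_abs_self _
        _ < Real.sqrt (Real.sqrt (2 * v 0 * ε)) := Real.sqrt_lt_sqrt (by positivity) hs
    have h6 := part1 ε hε
    have h7 : mink w (v + ε • e0) = mink w v - ε * w 0 := by
      rw [mink_add_smul, mink_e0_right]; ring
    rw [h7]; linarith
  refine ⟨part1, part2, ?_⟩
  intro hmax
  obtain ⟨ε₀, hε₀, hP⟩ := part2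
  set ε := ε₀ / 2 with hεdef
  have hε : 0 < ε := by positivity
  have hlt : ε < ε₀ := by simp [hεdef]; linarith
  have hcaus : IsCausalVec (v + ε • e0) := by
    constructor
    · rw [mink_expand, hnull]; nlinarith
    · have h : (0:ℝ) ≤ v 0 + ε := by positivity
      simpa [e0] using h
  have := hmax (v + ε • e0) hcaus
  have h0 : Real.sqrt (Real.sqrt |mink v v|) = 0 := by
    rw [hnull]; simp
  rw [h0] at this
  have := hP ε hε hlt
  linarith
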